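/- Let v be a non-crossing spanning path of a convex point set P (n ≥ 5) with exactly one diagonal, whose hull edges form two arcs: P_1 from a to c via b (b adjacent to a in P_1, and P_1 has at least two edges) and P_2 from c's hull-neighbor d to y. If v = P_1 ∪ P_2 ∪ {(a,d)}, then v has a neighbor v' in G(P) with two diagonals such that (a,b) ∉ v'; if v = P_1 ∪ P_2 ∪ {(c,y)}, then no such neighbor exists. -/

import Mathlib

namespace PG

/-- The `k`-th vertex (mod `n`) of the convex polygon. -/
def pt (n : ℕ) (hn : 0 < n) (k : ℕ) : Fin n := ⟨k % n, Nat.mod_lt _ hn⟩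

/-- `e` is a boundary (convex hull) edge of the convex `n`-gon. -/
def IsHullEdge {n : ℕ} (e : Sym2 (Fin n)) : Prop :=
  ∃ a b : Fin n, e = s(a, b) ∧ ((a.val + 1) % n = b.val ∨ (b.val + 1) % n = a.val)

instance {n : ℕ} : DecidablePred (IsHullEdge (n := n)) := fun _ => by
  unfold IsHullEdge; infer_instance

/-- Two chords of the convex `n`-gon cross (intersect in interior points):
their endpoint pairs are all distinct and separate each other in the cyclic order. -/
def Crosses {n : ℕ} (e f : Sym2 (Fin n)) : Prop :=
  ∃ a b c d : Fin n, e = s(a, b) ∧ f = s(c, d) ∧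
    a ≠ b ∧ c ≠ d ∧ a ≠ c ∧ a ≠ d ∧ b ≠ c ∧ b ≠ d ∧
    (((c.val + n - a.val) % n < (b.val + n - a.val) % n) ↔
      ¬((d.val + n - a.val) % n < (b.val + n - a.val) % n))

instance {n : ℕ} (e f : Sym2 (Fin n)) : Decidable (Crosses e f) := by
  unfold Crosses; infer_instance

/-- The edge set of the spanning path visiting the points in the order given
by the permutation `p`. -/
def pathEdges {n : ℕ} (p : Equiv.Perm (Fin n)) : Finset (Sym2 (Fin n)) :=
  Finset.univ.filter (fun e => ∃ i j : Fin n, e = s(p i, p j) ∧ j.val = i.val + 1)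

/-- `E` is the edge set of a non-crossing (plane) spanning path. -/
def IsNCPath {n : ℕ} (E : Finset (Sym2 (Fin n))) : Prop :=
  (∃ p : Equiv.Perm (Fin n), E = pathEdges p) ∧ ∀ e ∈ E, ∀ f ∈ E, ¬ Crosses e f

instance {n : ℕ} : DecidablePred (IsNCPath (n := n)) := fun _ => by
  unfold IsNCPath pathEdges; infer_instance

/-- Vertices of the path graph `G(P)`: non-crossing spanning paths. -/
def PVert (n : ℕ) := {E : Finset (Sym2 (Fin n)) // IsNCPath E}

instance {n : ℕ} : Fintype (PVert n) := Subtype.fintype _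
instance {n : ℕ} : DecidableEq (PVert n) := Subtype.instDecidableEq

/-- The path graph `G(P)`: two plane spanning paths are adjacent iff their
edge sets differ in exactly two edges. -/
def pathGraph (n : ℕ) : SimpleGraph (PVert n) where
  Adj u v := u ≠ v ∧ (u.1 \ v.1 ∪ v.1 \ u.1).card = 2
  symm := ⟨by rintro u v ⟨h1, h2⟩; exact ⟨h1.symm, by rwa [Finset.union_comm]⟩⟩
  loopless := ⟨by rintro u ⟨h, _⟩; exact h rfl⟩

instance {n : ℕ} : DecidableRel (pathGraph n).Adj := fun u v => by
  unfold pathGraph; infer_instance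

/-- `v` is a boundary path: all its edges are hull edges. -/
def IsBoundary {n : ℕ} (v : PVert n) : Prop := ∀ e ∈ v.1, IsHullEdge e

/-- Number of diagonals (the level) of a path. -/
def diagCount {n : ℕ} (v : PVert n) : ℕ :=
  (v.1.filter (fun e => ¬ IsHullEdge e)).card

/-- Degree of a point in an edge set. -/
def degIn {n : ℕ} (E : Finset (Sym2 (Fin n))) (x : Fin n) : ℕ :=
  (E.filter (fun e => x ∈ e)).card

/-- The edge set of the boundary arc starting at vertex `s0` with `len` edges. -/
def arc (n : ℕ) (hn : 0 < n) (s0 len : ℕ) : Finset (Sym2 (Fin n)) :=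
  (Finset.range len).image (fun i => s(pt n hn (s0 + i), pt n hn (s0 + i + 1)))

lemma ptv {n : ℕ} (hn : 0 < n) (k : ℕ) : (pt n hn k).val = k % n := rfl

lemma pt_congr {n : ℕ} (hn : 0 < n) {a b : ℕ} (h : a = b) : pt n hn a = pt n hn b := by rw [h]

lemma pt_inj' {n : ℕ} (hn : 0 < n) (r : ℕ) {u v : ℕ} :
    pt n hn (r + u) = pt n hn (r + v) ↔ u % n = v % n := by
  rw [Fin.ext_iff]
  show (r + u) % n = (r + v) % n ↔ _
  constructor
  · intro h
    exact Nat.ModEq.add_left_cancel' r h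
  · intro h
    rw [← Nat.add_mod_mod, h, Nat.add_mod_mod]

lemma pt_inj {n : ℕ} (hn : 0 < n) (r : ℕ) {u v : ℕ} (hu : u < n) (hv : v < n) :
    pt n hn (r + u) = pt n hn (r + v) ↔ u = v := by
  rw [pt_inj', Nat.mod_eq_of_lt hu, Nat.mod_eq_of_lt hv]

lemma pt_surj {n : ℕ} (hn : 0 < n) (r : ℕ) (z : Fin n) :
    ∃ x, x < n ∧ z = pt n hn (r + x) := by
  have hinj : Function.Injective (fun x : Fin n => pt n hn (r + x.1)) := by
    intro x y h
    exact Fin.ext ((pt_inj hn r x.2 y.2).mp h)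
  obtain ⟨x, hx⟩ := Finite.injective_iff_surjective.mp hinj z
  exact ⟨x.1, x.2, hx.symm⟩

lemma cyc_diff {n : ℕ} (hn : 0 < n) (r : ℕ) {x y : ℕ} (hx : x < n) (hy : y < n) :
    ((r + x) % n + n - (r + y) % n) % n = if y ≤ x then x - y else x + n - y := by
  have hA : (r + x) % n < n := Nat.mod_lt _ hn
  have hB : (r + y) % n < n := Nat.mod_lt _ hn
  set t := (r + x) % n + n - (r + y) % n with ht
  set w := if y ≤ x then x - y else x + n - y with hw
  have hwlt : w < n := by rw [hw]; split <;> omega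
  have hc : t ≡ w [MOD n] := by
    apply Nat.ModEq.add_right_cancel' ((r + y) % n)
    have h1 : t + (r + y) % n = (r + x) % n + n := by omega
    calc t + (r + y) % n = (r + x) % n + n := h1
      _ ≡ (r + x) + n [MOD n] := Nat.ModEq.add_right _ (Nat.mod_modEq _ _)
      _ ≡ w + (r + y) [MOD n] := by
          have h2 : w + (r + y) = (r + x) + (if y ≤ x then 0 else n) := by
            rw [hw]; split <;> omega
          rw [h2]
          split
          · show _ ≡ (r + x) + 0 [MOD n]
            unfold Nat.ModEq
            rw [Nat.add_mod_right, Nat.add_zero]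
          · rfl
      _ ≡ w + (r + y) % n [MOD n] := Nat.ModEq.add_left _ (Nat.mod_modEq _ _).symm
  calc t % n = w % n := hc
    _ = w := Nat.mod_eq_of_lt hwlt

lemma cyc_diff' {n : ℕ} (hn : 0 < n) (r : ℕ) (x y : ℕ) :
    ((r + x) % n + n - (r + y) % n) % n =
      if y % n ≤ x % n then x % n - y % n else x % n + n - y % n := by
  rw [← Nat.add_mod_mod r x n, ← Nat.add_mod_mod r y n]
  exact cyc_diff hn r (Nat.mod_lt _ hn) (Nat.mod_lt _ hn)

/-- abbreviation for a chord with endpoints at offsets `x`, `y` from `r`. -/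
def S (n : ℕ) (hn : 0 < n) (r x y : ℕ) : Sym2 (Fin n) :=
  s(pt n hn (r + x), pt n hn (r + y))

lemma S_inj {n : ℕ} (hn : 0 < n) (r : ℕ) {x1 y1 x2 y2 : ℕ}
    (h1 : x1 < n) (h2 : y1 < n) (h3 : x2 < n) (h4 : y2 < n) :
    S n hn r x1 y1 = S n hn r x2 y2 ↔ (x1 = x2 ∧ y1 = y2) ∨ (x1 = y2 ∧ y1 = x2) := by
  unfold S
  rw [Sym2.eq_iff, pt_inj hn r h1 h3, pt_inj hn r h2 h4, pt_inj hn r h1 h4,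
    pt_inj hn r h2 h3]

lemma not_crosses_S {n : ℕ} (hn : 0 < n) (r : ℕ) {i1 j1 i2 j2 : ℕ}
    (h11 : i1 < j1) (h12 : j1 < n) (h21 : i2 < j2) (h22 : j2 < n)
    (hsep : j1 ≤ i2 ∨ j2 ≤ i1 ∨ (i1 ≤ i2 ∧ j2 ≤ j1) ∨ (i2 ≤ i1 ∧ j1 ≤ j2)) :
    ¬ Crosses (S n hn r i1 j1) (S n hn r i2 j2) := by
  rintro ⟨a, b, c, d, he, hf, -, -, hac, had, hbc, hbd, hiff⟩
  rw [S, Sym2.eq_iff] at he hf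
  have e1 : i1 % n = i1 := Nat.mod_eq_of_lt (by omega)
  have e2 : j1 % n = j1 := Nat.mod_eq_of_lt (by omega)
  have e3 : i2 % n = i2 := Nat.mod_eq_of_lt (by omega)
  have e4 : j2 % n = j2 := Nat.mod_eq_of_lt (by omega)
  obtain ⟨rfl, rfl⟩ | ⟨rfl, rfl⟩ := he <;> obtain ⟨rfl, rfl⟩ | ⟨rfl, rfl⟩ := hf <;>
  · simp only [ptv, cyc_diff' hn r] at hiff
    simp only [ne_eq, pt_inj' hn r] at hac had hbc hbd
    split_ifs at hiff <;> omega

lemma crosses_S {n : ℕ} (hn : 0 < n) (r : ℕ) {i1 j1 i2 j2 : ℕ}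
    (h1 : i1 < i2) (h2 : i2 < j1) (h3 : j1 < j2) (h4 : j2 < n) :
    Crosses (S n hn r i1 j1) (S n hn r i2 j2) := by
  have e1 : i1 % n = i1 := Nat.mod_eq_of_lt (by omega)
  have e2 : j1 % n = j1 := Nat.mod_eq_of_lt (by omega)
  have e3 : i2 % n = i2 := Nat.mod_eq_of_lt (by omega)
  have e4 : j2 % n = j2 := Nat.mod_eq_of_lt (by omega)
  refine ⟨pt n hn (r + i1), pt n hn (r + j1), pt n hn (r + i2), pt n hn (r + j2),
    rfl, rfl, ?_, ?_, ?_, ?_, ?_, ?_, ?_⟩ <;>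
    first
    | (simp only [ne_eq, pt_inj' hn r]; omega)
    | (simp only [ptv, cyc_diff' hn r]; split_ifs <;> omega)

lemma mem_arc {n : ℕ} {hn : 0 < n} {s0 len : ℕ} {e : Sym2 (Fin n)} :
    e ∈ arc n hn s0 len ↔ ∃ i, i < len ∧ e = s(pt n hn (s0 + i), pt n hn (s0 + i + 1)) := by
  unfold arc
  simp only [Finset.mem_image, Finset.mem_range]
  constructor
  · rintro ⟨i, hi, rfl⟩; exact ⟨i, hi, rfl⟩
  · rintro ⟨i, hi, rfl⟩; exact ⟨i, hi, rfl⟩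

lemma mem_pathEdges {n : ℕ} {p : Equiv.Perm (Fin n)} {e : Sym2 (Fin n)} :
    e ∈ pathEdges p ↔ ∃ i j : Fin n, e = s(p i, p j) ∧ j.val = i.val + 1 := by
  unfold pathEdges
  simp only [Finset.mem_filter, Finset.mem_univ, true_and]

lemma pathEdges_card {n : ℕ} (hn : 0 < n) (p : Equiv.Perm (Fin n)) :
    (pathEdges p).card = n - 1 := by
  classical
  set g : Fin (n - 1) → Sym2 (Fin n) :=
    fun t => s(p ⟨t.1, by have := t.2; omega⟩, p ⟨t.1 + 1, by have := t.2; omega⟩) with hg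
  have himg : pathEdges p = Finset.image g Finset.univ := by
    ext e
    rw [mem_pathEdges]
    simp only [Finset.mem_image, Finset.mem_univ, true_and]
    constructor
    · rintro ⟨i, j, rfl, hj⟩
      have hi : i.1 < n - 1 := by have := j.2; omega
      refine ⟨⟨i.1, hi⟩, ?_⟩
      rw [hg]
      have h1 : (⟨i.1, by omega⟩ : Fin n) = i := rfl
      have h2 : (⟨i.1 + 1, by have := j.2; omega⟩ : Fin n) = j := Fin.ext (by simp [hj])
      simp only [h1]
      exact congrArg (fun z => s(p i, p z)) (Fin.ext (by simp [hj]))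
    · rintro ⟨t, rfl⟩
      exact ⟨⟨t.1, by have := t.2; omega⟩, ⟨t.1 + 1, by have := t.2; omega⟩, rfl, rfl⟩
  have hginj : Function.Injective g := by
    intro t t' h
    rw [hg] at h
    simp only [Sym2.eq_iff] at h
    obtain ⟨h1, h2⟩ | ⟨h1, h2⟩ := h
    · have := p.injective h1
      exact Fin.ext (by simpa [Fin.ext_iff] using this)
    · have ha := p.injective h1
      have hb := p.injective h2
      simp only [Fin.ext_iff] at ha hb
      omega
  rw [himg, Finset.card_image_of_injective _ hginj, Finset.card_univ, Fintype.card_fin]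

lemma deg_le_two {n : ℕ} (p : Equiv.Perm (Fin n)) (x : Fin n) :
    degIn (pathEdges p) x ≤ 2 := by
  classical
  unfold degIn
  have hn0 : 0 < n := lt_of_le_of_lt (Nat.zero_le _) (p.symm x).2
  have hsub : (pathEdges p).filter (fun e => x ∈ e) ⊆
      {s(p ⟨(p.symm x).1 - 1, by have := (p.symm x).2; omega⟩, p (p.symm x)),
       s(p (p.symm x), p ⟨((p.symm x).1 + 1) % n, Nat.mod_lt _ hn0⟩)} := by
    intro e he
    rw [Finset.mem_filter, mem_pathEdges] at he
    obtain ⟨⟨i, j, rfl, hj⟩, hx⟩ := he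
    rw [Sym2.mem_iff] at hx
    rw [Finset.mem_insert, Finset.mem_singleton]
    obtain hx | hx := hx
    · right
      have hi : p.symm x = i := by rw [hx, Equiv.symm_apply_apply]
      subst hi
      have hb : (p.symm x).1 + 1 < n := by have := j.2; omega
      have hjj : j = ⟨((p.symm x).1 + 1) % n, Nat.mod_lt _ hn0⟩ :=
        Fin.ext (by show j.1 = ((p.symm x).1 + 1) % n
                    rw [Nat.mod_eq_of_lt hb]; exact hj)
      rw [hjj]
    · left
      have hjje : p.symm x = j := by rw [hx, Equiv.symm_apply_apply]
      subst hjje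
      have hii : i = ⟨(p.symm x).1 - 1, by have := (p.symm x).2; omega⟩ :=
        Fin.ext (by show i.1 = (p.symm x).1 - 1; omega)
      rw [hii]
  calc ((pathEdges p).filter (fun e => x ∈ e)).card ≤ _ := Finset.card_le_card hsub
    _ ≤ 2 := by
        apply le_trans (Finset.card_insert_le _ _)
        simp

lemma deg_ge_one {n : ℕ} (hn : 2 ≤ n) (p : Equiv.Perm (Fin n)) (x : Fin n) :
    1 ≤ degIn (pathEdges p) x := by
  classical
  unfold degIn
  rw [Nat.one_le_iff_ne_zero, ← Nat.pos_iff_ne_zero, Finset.card_pos]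
  set i0 := p.symm x with hi0
  have hx : x = p i0 := (Equiv.apply_symm_apply p x).symm
  by_cases h : i0.1 + 1 < n
  · refine ⟨s(p i0, p ⟨i0.1 + 1, h⟩), ?_⟩
    rw [Finset.mem_filter, mem_pathEdges]
    exact ⟨⟨i0, ⟨i0.1 + 1, h⟩, rfl, rfl⟩, by rw [Sym2.mem_iff]; left; exact hx⟩
  · have h1 : 1 ≤ i0.1 := by have := i0.2; omega
    refine ⟨s(p ⟨i0.1 - 1, by have := i0.2; omega⟩, p i0), ?_⟩
    rw [Finset.mem_filter, mem_pathEdges]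
    refine ⟨⟨⟨i0.1 - 1, by have := i0.2; omega⟩, i0, rfl, by simp; omega⟩,
      by rw [Sym2.mem_iff]; right; exact hx⟩

lemma degIn_union_singleton {n : ℕ} {E : Finset (Sym2 (Fin n))} {f : Sym2 (Fin n)}
    (hf : f ∉ E) (x : Fin n) :
    degIn (E ∪ {f}) x = degIn E x + (if x ∈ f then 1 else 0) := by
  classical
  unfold degIn
  rw [Finset.filter_union, Finset.filter_singleton]
  split
  · rw [Finset.card_union_of_disjoint (by simp [Finset.disjoint_singleton_right,
      Finset.mem_filter, hf])]
    simp
  · simp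

lemma two_le_degIn {n : ℕ} {E : Finset (Sym2 (Fin n))} {e1 e2 : Sym2 (Fin n)} {x : Fin n}
    (h1 : e1 ∈ E) (h2 : e2 ∈ E) (hne : e1 ≠ e2) (hx1 : x ∈ e1) (hx2 : x ∈ e2) :
    2 ≤ degIn E x := by
  classical
  unfold degIn
  have m1 : e1 ∈ E.filter (fun e => x ∈ e) := Finset.mem_filter.mpr ⟨h1, hx1⟩
  have m2 : e2 ∈ E.filter (fun e => x ∈ e) := Finset.mem_filter.mpr ⟨h2, hx2⟩
  have := Finset.one_lt_card.mpr ⟨e1, m1, e2, m2, hne⟩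
  omega

lemma memEA {n m r : ℕ} (hn : 0 < n) (hn5 : 5 ≤ n) (hm2 : 2 ≤ m) (hm : m ≤ n - 3)
    {e : Sym2 (Fin n)} :
    e ∈ arc n hn r m ∪ arc n hn (r + m + 1) (n - m - 2) ∪ {S n hn r 0 (m + 1)} ↔
    ∃ x y, x < y ∧ y < n ∧ e = S n hn r x y ∧
      ((y = x + 1 ∧ x < m) ∨ (y = x + 1 ∧ m + 1 ≤ x ∧ x ≤ n - 2) ∨ (x = 0 ∧ y = m + 1)) := by
  simp only [Finset.mem_union, Finset.mem_singleton, mem_arc]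
  constructor
  · rintro ((⟨i, hi, rfl⟩ | ⟨i, hi, rfl⟩) | rfl)
    · exact ⟨i, i + 1, by omega, by omega, rfl, Or.inl ⟨rfl, hi⟩⟩
    · refine ⟨m + 1 + i, m + 2 + i, by omega, by omega, ?_, Or.inr (Or.inl ⟨by omega, by omega, by omega⟩)⟩
      unfold S
      rw [pt_congr hn (show r + m + 1 + i = r + (m + 1 + i) by omega),
        pt_congr hn (show r + m + 1 + i + 1 = r + (m + 2 + i) by omega)]
    · exact ⟨0, m + 1, by omega, by omega, rfl, Or.inr (Or.inr ⟨rfl, rfl⟩)⟩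
  · rintro ⟨x, y, hxy, hyn, rfl, (⟨rfl, hx⟩ | ⟨rfl, hx1, hx2⟩ | ⟨rfl, rfl⟩)⟩
    · exact Or.inl (Or.inl ⟨x, hx, rfl⟩)
    · refine Or.inl (Or.inr ⟨x - (m + 1), by omega, ?_⟩)
      unfold S
      rw [pt_congr hn (show r + m + 1 + (x - (m + 1)) = r + x by omega),
        pt_congr hn (show r + m + 1 + (x - (m + 1)) + 1 = r + (x + 1) by omega)]
    · exact Or.inr rfl

lemma memEA' {n m r : ℕ} (hn : 0 < n) (hn5 : 5 ≤ n) (hm2 : 2 ≤ m) (hm : m ≤ n - 3)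
    {e : Sym2 (Fin n)} :
    e ∈ arc n hn (r + 1) (m - 1) ∪ arc n hn (r + m + 1) (n - m - 2) ∪
      {S n hn r 0 (m + 1), S n hn r 0 m} ↔
    ∃ x y, x < y ∧ y < n ∧ e = S n hn r x y ∧
      ((y = x + 1 ∧ 1 ≤ x ∧ x < m) ∨ (y = x + 1 ∧ m + 1 ≤ x ∧ x ≤ n - 2) ∨
        (x = 0 ∧ y = m + 1) ∨ (x = 0 ∧ y = m)) := by
  simp only [Finset.mem_union, Finset.mem_insert, Finset.mem_singleton, mem_arc]
  constructor
  · rintro ((⟨i, hi, rfl⟩ | ⟨i, hi, rfl⟩) | rfl | rfl)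
    · refine ⟨i + 1, i + 2, by omega, by omega, ?_, Or.inl ⟨by omega, by omega, by omega⟩⟩
      unfold S
      rw [pt_congr hn (show r + 1 + i = r + (i + 1) by omega),
        pt_congr hn (show r + 1 + i + 1 = r + (i + 2) by omega)]
    · refine ⟨m + 1 + i, m + 2 + i, by omega, by omega, ?_, Or.inr (Or.inl ⟨by omega, by omega, by omega⟩)⟩
      unfold S
      rw [pt_congr hn (show r + m + 1 + i = r + (m + 1 + i) by omega),
        pt_congr hn (show r + m + 1 + i + 1 = r + (m + 2 + i) by omega)]
    · exact ⟨0, m + 1, by omega, by omega, rfl, Or.inr (Or.inr (Or.inl ⟨rfl, rfl⟩))⟩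
    · exact ⟨0, m, by omega, by omega, rfl, Or.inr (Or.inr (Or.inr ⟨rfl, rfl⟩))⟩
  · rintro ⟨x, y, hxy, hyn, rfl, (⟨rfl, hx0, hx⟩ | ⟨rfl, hx1, hx2⟩ | ⟨rfl, rfl⟩ | ⟨rfl, rfl⟩)⟩
    · refine Or.inl (Or.inl ⟨x - 1, by omega, ?_⟩)
      unfold S
      rw [pt_congr hn (show r + 1 + (x - 1) = r + x by omega),
        pt_congr hn (show r + 1 + (x - 1) + 1 = r + (x + 1) by omega)]
    · refine Or.inl (Or.inr ⟨x - (m + 1), by omega, ?_⟩)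
      unfold S
      rw [pt_congr hn (show r + m + 1 + (x - (m + 1)) = r + x by omega),
        pt_congr hn (show r + m + 1 + (x - (m + 1)) + 1 = r + (x + 1) by omega)]
    · exact Or.inr (Or.inl rfl)
    · exact Or.inr (Or.inr rfl)

lemma memEB {n m r : ℕ} (hn : 0 < n) (hn5 : 5 ≤ n) (hm2 : 2 ≤ m) (hm : m ≤ n - 3)
    {e : Sym2 (Fin n)} :
    e ∈ arc n hn r m ∪ arc n hn (r + m + 1) (n - m - 2) ∪ {S n hn r m (n - 1)} ↔
    ∃ x y, x < y ∧ y < n ∧ e = S n hn r x y ∧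
      ((y = x + 1 ∧ x < m) ∨ (y = x + 1 ∧ m + 1 ≤ x ∧ x ≤ n - 2) ∨ (x = m ∧ y = n - 1)) := by
  simp only [Finset.mem_union, Finset.mem_singleton, mem_arc]
  constructor
  · rintro ((⟨i, hi, rfl⟩ | ⟨i, hi, rfl⟩) | rfl)
    · exact ⟨i, i + 1, by omega, by omega, rfl, Or.inl ⟨rfl, hi⟩⟩
    · refine ⟨m + 1 + i, m + 2 + i, by omega, by omega, ?_, Or.inr (Or.inl ⟨by omega, by omega, by omega⟩)⟩
      unfold S
      rw [pt_congr hn (show r + m + 1 + i = r + (m + 1 + i) by omega),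
        pt_congr hn (show r + m + 1 + i + 1 = r + (m + 2 + i) by omega)]
    · exact ⟨m, n - 1, by omega, by omega, rfl, Or.inr (Or.inr ⟨rfl, rfl⟩)⟩
  · rintro ⟨x, y, hxy, hyn, rfl, (⟨rfl, hx⟩ | ⟨rfl, hx1, hx2⟩ | ⟨rfl, rfl⟩)⟩
    · exact Or.inl (Or.inl ⟨x, hx, rfl⟩)
    · refine Or.inl (Or.inr ⟨x - (m + 1), by omega, ?_⟩)
      unfold S
      rw [pt_congr hn (show r + m + 1 + (x - (m + 1)) = r + x by omega),
        pt_congr hn (show r + m + 1 + (x - (m + 1)) + 1 = r + (x + 1) by omega)]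
    · exact Or.inr rfl

lemma hull_unit {n : ℕ} (hn : 0 < n) (r x : ℕ) : IsHullEdge (S n hn r x (x + 1)) := by
  refine ⟨pt n hn (r + x), pt n hn (r + (x + 1)), rfl, Or.inl ?_⟩
  show ((r + x) % n + 1) % n = (r + (x + 1)) % n
  rw [Nat.mod_add_mod, Nat.add_assoc]

lemma not_hull {n : ℕ} (hn : 0 < n) (r : ℕ) {x y : ℕ} (hx : x < n) (hy : y < n)
    (h1 : (x + 1) % n ≠ y) (h2 : (y + 1) % n ≠ x) : ¬ IsHullEdge (S n hn r x y) := by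
  rintro ⟨a, b, heq, hadj⟩
  rw [S, Sym2.eq_iff] at heq
  have key : ∀ u v : ℕ, v < n → ((r + u) % n + 1) % n = (r + v) % n →
      (u + 1) % n = v := by
    intro u v hv h
    have h' : pt n hn (r + (u + 1)) = pt n hn (r + v) := by
      apply Fin.ext
      show (r + (u + 1)) % n = (r + v) % n
      rw [← h, Nat.mod_add_mod, ← Nat.add_assoc]
    rw [pt_inj' hn r, Nat.mod_eq_of_lt hv] at h'
    exact h'
  obtain ⟨ha, hb⟩ | ⟨ha, hb⟩ := heq <;> rw [← ha, ← hb] at hadj <;>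
    simp only [ptv] at hadj
  · obtain h | h := hadj
    · exact h1 (key x y hy h)
    · exact h2 (key y x hx h)
  · obtain h | h := hadj
    · exact h2 (key y x hx h)
    · exact h1 (key x y hy h)

lemma exists_perm_EA' {n m r : ℕ} (hn : 0 < n) (hn5 : 5 ≤ n) (hm2 : 2 ≤ m) (hm : m ≤ n - 3) :
    ∃ p : Equiv.Perm (Fin n),
      arc n hn (r + 1) (m - 1) ∪ arc n hn (r + m + 1) (n - m - 2) ∪
        {S n hn r 0 (m + 1), S n hn r 0 m} = pathEdges p := by
  classical
  set f : ℕ → ℕ := fun k => if k < m then k + 1 else if k = m then 0 else k with hf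
  have hflt : ∀ k, k < n → f k < n := by
    intro k hk
    simp only [hf]
    split_ifs <;> omega
  set g : Fin n → Fin n := fun i => pt n hn (r + f i.1) with hg
  have hginj : Function.Injective g := by
    intro i j h
    rw [hg] at h
    simp only at h
    rw [pt_inj hn r (hflt _ i.2) (hflt _ j.2)] at h
    apply Fin.ext
    simp only [hf] at h
    split_ifs at h <;> omega
  refine ⟨Equiv.ofBijective g (Finite.injective_iff_bijective.mp hginj), ?_⟩
  have hfval : ∀ k, k < m → f k = k + 1 := fun k hk => by simp only [hf]; rw [if_pos hk]
  have hfm : f m = 0 := by simp [hf]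
  have hfge : ∀ k, m < k → f k = k := fun k hk => by
    simp only [hf]; rw [if_neg (by omega), if_neg (by omega)]
  ext e
  rw [mem_pathEdges, memEA' hn hn5 hm2 hm]
  simp only [Equiv.ofBijective_apply, hg]
  constructor
  · rintro ⟨x, y, hxy, hyn, rfl, hq⟩
    obtain ⟨rfl, hx0, hx⟩ | ⟨rfl, hx1, hx2⟩ | ⟨rfl, rfl⟩ | ⟨rfl, hy⟩ := hq
    · refine ⟨⟨x - 1, by omega⟩, ⟨x, by omega⟩, ?_, by simp; omega⟩
      show S n hn r x (x + 1) = s(pt n hn (r + f (x - 1)), pt n hn (r + f x))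
      rw [hfval _ (by omega), hfval _ (by omega)]
      unfold S
      rw [pt_congr hn (show r + x = r + (x - 1 + 1) by omega)]
    · refine ⟨⟨x, by omega⟩, ⟨x + 1, by omega⟩, ?_, by simp⟩
      show S n hn r x (x + 1) = s(pt n hn (r + f x), pt n hn (r + f (x + 1)))
      rw [hfge _ (by omega), hfge _ (by omega)]
      rfl
    · refine ⟨⟨m, by omega⟩, ⟨m + 1, by omega⟩, ?_, by simp⟩
      show S n hn r 0 (m + 1) = s(pt n hn (r + f m), pt n hn (r + f (m + 1)))
      rw [hfm, hfge _ (by omega)]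
      rfl
    · rw [hy]
      refine ⟨⟨m - 1, by omega⟩, ⟨m, by omega⟩, ?_, by simp; omega⟩
      show S n hn r 0 m = s(pt n hn (r + f (m - 1)), pt n hn (r + f m))
      rw [hfm, hfval _ (by omega)]
      unfold S
      rw [pt_congr hn (show r + (m - 1 + 1) = r + m by omega)]
      exact Sym2.eq_swap
  · rintro ⟨i, j, rfl, hj⟩
    have hjn := j.2
    have hin := i.2
    by_cases h1 : i.1 + 1 < m
    · refine ⟨i.1 + 1, i.1 + 2, by omega, by omega, ?_, Or.inl ⟨by omega, by omega, by omega⟩⟩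
      show s(pt n hn (r + f i.1), pt n hn (r + f j.1)) = S n hn r (i.1 + 1) (i.1 + 2)
      rw [hfval _ (by omega), hfval _ (by omega), hj]
      rfl
    · by_cases h2 : i.1 + 1 = m
      · refine ⟨0, m, by omega, by omega, ?_, Or.inr (Or.inr (Or.inr ⟨rfl, rfl⟩))⟩
        show s(pt n hn (r + f i.1), pt n hn (r + f j.1)) = S n hn r 0 m
        rw [hfval _ (by omega), hj, h2, hfm]
        exact Sym2.eq_swap
      · by_cases h3 : i.1 = m
        · refine ⟨0, m + 1, by omega, by omega, ?_, Or.inr (Or.inr (Or.inl ⟨rfl, rfl⟩))⟩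
          show s(pt n hn (r + f i.1), pt n hn (r + f j.1)) = S n hn r 0 (m + 1)
          rw [h3, hfm, hj, h3, hfge _ (by omega)]
          rfl
        · refine ⟨i.1, i.1 + 1, by omega, by omega, ?_,
            Or.inr (Or.inl ⟨rfl, by omega, by omega⟩)⟩
          show s(pt n hn (r + f i.1), pt n hn (r + f j.1)) = S n hn r i.1 (i.1 + 1)
          rw [hfge _ (by omega), hj, hfge _ (by omega)]
          rfl

lemma degB_zero {n m r : ℕ} (hn : 0 < n) (hn5 : 5 ≤ n) (hm2 : 2 ≤ m) (hm : m ≤ n - 3) :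
    degIn ((arc n hn r m ∪ arc n hn (r + m + 1) (n - m - 2) ∪ {S n hn r m (n - 1)}) \
      {S n hn r 0 1}) (pt n hn (r + 0)) = 0 := by
  classical
  unfold degIn
  rw [Finset.card_eq_zero, Finset.filter_eq_empty_iff]
  intro e he
  rw [Finset.mem_sdiff, Finset.mem_singleton, memEB hn hn5 hm2 hm] at he
  obtain ⟨⟨x, y, hxy, hyn, rfl, hq⟩, hne⟩ := he
  intro hmem
  rw [S, Sym2.mem_iff] at hmem
  have hx0 : x = 0 ∨ y = 0 := by
    obtain h | h := hmem
    · left; exact ((pt_inj hn r (by omega) (by omega)).mp h).symm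
    · right; exact ((pt_inj hn r (by omega) (by omega)).mp h).symm
  have : x = 0 ∧ y = 1 := by omega
  obtain ⟨rfl, rfl⟩ := this
  exact hne rfl

lemma degB_two {n m r : ℕ} (hn : 0 < n) (hn5 : 5 ≤ n) (hm2 : 2 ≤ m) (hm : m ≤ n - 3)
    {x : ℕ} (hx : x < n) (h0 : x ≠ 0) (h1 : x ≠ 1) (hm1 : x ≠ m + 1) :
    2 ≤ degIn ((arc n hn r m ∪ arc n hn (r + m + 1) (n - m - 2) ∪ {S n hn r m (n - 1)}) \
      {S n hn r 0 1}) (pt n hn (r + x)) := by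
  classical
  have hmem : ∀ x1 y1 : ℕ, x1 < y1 → y1 < n →
      ((y1 = x1 + 1 ∧ x1 < m) ∨ (y1 = x1 + 1 ∧ m + 1 ≤ x1 ∧ x1 ≤ n - 2) ∨ (x1 = m ∧ y1 = n - 1)) →
      ¬(x1 = 0 ∧ y1 = 1) →
      S n hn r x1 y1 ∈ (arc n hn r m ∪ arc n hn (r + m + 1) (n - m - 2) ∪
        {S n hn r m (n - 1)}) \ {S n hn r 0 1} := by
    intro x1 y1 ha hb hc hd
    rw [Finset.mem_sdiff, Finset.mem_singleton, memEB hn hn5 hm2 hm]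
    refine ⟨⟨x1, y1, ha, hb, rfl, hc⟩, ?_⟩
    rw [S_inj hn r (by omega) (by omega) (by omega) (by omega)]
    omega
  have hSne : ∀ x1 y1 x2 y2 : ℕ, x1 < n → y1 < n → x2 < n → y2 < n →
      ¬((x1 = x2 ∧ y1 = y2) ∨ (x1 = y2 ∧ y1 = x2)) → S n hn r x1 y1 ≠ S n hn r x2 y2 := by
    intro x1 y1 x2 y2 a b c d h
    rw [Ne, S_inj hn r a b c d]
    exact h
  have hin : ∀ u v : ℕ, u < n → v < n → (x = u ∨ x = v) → pt n hn (r + x) ∈ S n hn r u v := by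
    intro u v hu hv h
    rw [S, Sym2.mem_iff]
    obtain rfl | rfl := h
    · left; rfl
    · right; rfl
  rcases Nat.lt_or_ge x m with hc1 | hc1
  · -- 2 ≤ x ≤ m - 1 : edges (x-1,x) and (x,x+1)
    exact two_le_degIn (hmem (x - 1) x (by omega) (by omega) (by omega) (by omega))
      (hmem x (x + 1) (by omega) (by omega) (by omega) (by omega))
      (hSne _ _ _ _ (by omega) (by omega) (by omega) (by omega) (by omega))
      (hin _ _ (by omega) (by omega) (by omega)) (hin _ _ (by omega) (by omega) (by omega))
  · rcases Nat.eq_or_lt_of_le hc1 with hc2 | hc2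
    · -- x = m : edges (m-1, m) and (m, n-1)
      exact two_le_degIn (hmem (x - 1) x (by omega) (by omega) (by omega) (by omega))
        (hmem m (n - 1) (by omega) (by omega) (by omega) (by omega))
        (hSne _ _ _ _ (by omega) (by omega) (by omega) (by omega) (by omega))
        (hin _ _ (by omega) (by omega) (by omega)) (hin _ _ (by omega) (by omega) (by omega))
    · rcases Nat.lt_or_ge x (n - 1) with hc3 | hc3
      · -- m + 2 ≤ x ≤ n - 2 : edges (x-1, x) and (x, x+1)
        exact two_le_degIn (hmem (x - 1) x (by omega) (by omega) (by omega) (by omega))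
          (hmem x (x + 1) (by omega) (by omega) (by omega) (by omega))
          (hSne _ _ _ _ (by omega) (by omega) (by omega) (by omega) (by omega))
          (hin _ _ (by omega) (by omega) (by omega)) (hin _ _ (by omega) (by omega) (by omega))
      · -- x = n - 1 : edges (n-2, n-1) and (m, n-1)
        exact two_le_degIn (hmem (n - 2) (n - 1) (by omega) (by omega) (by omega) (by omega))
          (hmem m (n - 1) (by omega) (by omega) (by omega) (by omega))
          (hSne _ _ _ _ (by omega) (by omega) (by omega) (by omega) (by omega))
          (hin _ _ (by omega) (by omega) (by omega)) (hin _ _ (by omega) (by omega) (by omega))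

/-- Recovery at level 1.  Let `v` be a plane spanning path with exactly one
diagonal, whose hull edges form the two arcs `P₁ = (a = pt r, b = pt (r+1), …,
c = pt (r+m))` (with at least two edges) and `P₂ = (d = pt (r+m+1), …,
y = pt (r+n-1))`.  If the diagonal of `v` is `(a,d)` then `v` has a neighbor `v'`
at level 2 with `(a,b) ∉ v'`; if the diagonal is `(c,y)`, no such neighbor
exists. -/
theorem level_one_recovery (n : ℕ) (hn : 5 ≤ n) (r m : ℕ)
    (hm2 : 2 ≤ m) (hm : m ≤ n - 3) (v : PVert n) :
    (v.1 = arc n (by omega) r m ∪ arc n (by omega) (r + m + 1) (n - m - 2) ∪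
        {s(pt n (by omega) r, pt n (by omega) (r + m + 1))} →
      ∃ v' : PVert n, (pathGraph n).Adj v v' ∧ diagCount v' = 2 ∧
        s(pt n (by omega) r, pt n (by omega) (r + 1)) ∉ v'.1) ∧
    (v.1 = arc n (by omega) r m ∪ arc n (by omega) (r + m + 1) (n - m - 2) ∪
        {s(pt n (by omega) (r + m), pt n (by omega) (r + n - 1))} →
      ¬ ∃ v' : PVert n, (pathGraph n).Adj v v' ∧ diagCount v' = 2 ∧
        s(pt n (by omega) r, pt n (by omega) (r + 1)) ∉ v'.1) := by
  have hn0 : 0 < n := by omega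
  constructor
  · -- Part 1: diagonal (a,d); construct the neighbor
    intro hv
    have hvE : v.1 = arc n hn0 r m ∪ arc n hn0 (r + m + 1) (n - m - 2) ∪
        {S n hn0 r 0 (m + 1)} := hv
    obtain ⟨p, hp⟩ := exists_perm_EA' (n := n) (m := m) (r := r) hn0 hn hm2 hm
    have hnc : ∀ e ∈ arc n hn0 (r + 1) (m - 1) ∪ arc n hn0 (r + m + 1) (n - m - 2) ∪
        {S n hn0 r 0 (m + 1), S n hn0 r 0 m}, ∀ f ∈ arc n hn0 (r + 1) (m - 1) ∪
        arc n hn0 (r + m + 1) (n - m - 2) ∪ {S n hn0 r 0 (m + 1), S n hn0 r 0 m},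
        ¬ Crosses e f := by
      intro e he f hf
      obtain ⟨x1, y1, h1, h2, rfl, hq1⟩ := (memEA' hn0 hn hm2 hm).mp he
      obtain ⟨x2, y2, h3, h4, rfl, hq2⟩ := (memEA' hn0 hn hm2 hm).mp hf
      exact not_crosses_S hn0 r h1 h2 h3 h4 (by omega)
    refine ⟨⟨arc n hn0 (r + 1) (m - 1) ∪ arc n hn0 (r + m + 1) (n - m - 2) ∪
      {S n hn0 r 0 (m + 1), S n hn0 r 0 m}, ⟨p, hp⟩, hnc⟩, ⟨?_, ?_⟩, ?_, ?_⟩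
    · -- v ≠ v'
      intro heq
      have h1 : v.1 = arc n hn0 (r + 1) (m - 1) ∪ arc n hn0 (r + m + 1) (n - m - 2) ∪
          {S n hn0 r 0 (m + 1), S n hn0 r 0 m} := congrArg Subtype.val heq
      have h2 : S n hn0 r 0 1 ∈ v.1 := by
        rw [hvE]
        exact (memEA hn0 hn hm2 hm).mpr ⟨0, 1, by omega, by omega, rfl, Or.inl ⟨rfl, by omega⟩⟩
      rw [h1] at h2
      obtain ⟨x, y, hxy, hyn, heq2, hq⟩ := (memEA' hn0 hn hm2 hm).mp h2
      rw [S_inj hn0 r (by omega) (by omega) (by omega) (by omega)] at heq2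
      omega
    · -- symmetric difference has exactly two elements
      have hd : v.1 \ (arc n hn0 (r + 1) (m - 1) ∪ arc n hn0 (r + m + 1) (n - m - 2) ∪
            {S n hn0 r 0 (m + 1), S n hn0 r 0 m}) ∪
          (arc n hn0 (r + 1) (m - 1) ∪ arc n hn0 (r + m + 1) (n - m - 2) ∪
            {S n hn0 r 0 (m + 1), S n hn0 r 0 m}) \ v.1 =
          {S n hn0 r 0 1, S n hn0 r 0 m} := by
        ext e
        constructor
        · intro h
          rcases Finset.mem_union.mp h with h | h
          · obtain ⟨hA, hB⟩ := Finset.mem_sdiff.mp h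
            rw [hvE] at hA
            obtain ⟨x, y, hxy, hyn, rfl, hq⟩ := (memEA hn0 hn hm2 hm).mp hA
            have hx01 : x = 0 ∧ y = 1 := by
              by_contra hcon
              exact hB ((memEA' hn0 hn hm2 hm).mpr ⟨x, y, hxy, hyn, rfl, by omega⟩)
            refine Finset.mem_insert.mpr (Or.inl ?_)
            rw [S_inj hn0 r (by omega) (by omega) (by omega) (by omega)]
            omega
          · obtain ⟨hA, hB⟩ := Finset.mem_sdiff.mp h
            obtain ⟨x, y, hxy, hyn, rfl, hq⟩ := (memEA' hn0 hn hm2 hm).mp hA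
            have hx0m : x = 0 ∧ y = m := by
              by_contra hcon
              apply hB
              rw [hvE]
              exact (memEA hn0 hn hm2 hm).mpr ⟨x, y, hxy, hyn, rfl, by omega⟩
            refine Finset.mem_insert.mpr (Or.inr (Finset.mem_singleton.mpr ?_))
            rw [S_inj hn0 r (by omega) (by omega) (by omega) (by omega)]
            omega
        · intro h
          rcases Finset.mem_insert.mp h with rfl | h
          · apply Finset.mem_union_left
            rw [Finset.mem_sdiff]
            refine ⟨by
              rw [hvE]
              exact (memEA hn0 hn hm2 hm).mpr ⟨0, 1, by omega, by omega, rfl,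
                Or.inl ⟨rfl, by omega⟩⟩, ?_⟩
            intro hB
            obtain ⟨x, y, hxy, hyn, heq2, hq⟩ := (memEA' hn0 hn hm2 hm).mp hB
            rw [S_inj hn0 r (by omega) (by omega) (by omega) (by omega)] at heq2
            omega
          · rw [Finset.mem_singleton] at h
            subst h
            apply Finset.mem_union_right
            rw [Finset.mem_sdiff]
            refine ⟨(memEA' hn0 hn hm2 hm).mpr ⟨0, m, by omega, by omega, rfl,
              Or.inr (Or.inr (Or.inr ⟨rfl, rfl⟩))⟩, ?_⟩
            intro hA
            rw [hvE] at hA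
            obtain ⟨x, y, hxy, hyn, heq2, hq⟩ := (memEA hn0 hn hm2 hm).mp hA
            rw [S_inj hn0 r (by omega) (by omega) (by omega) (by omega)] at heq2
            omega
      rw [hd, Finset.card_insert_of_notMem (by
        rw [Finset.mem_singleton, S_inj hn0 r (by omega) (by omega) (by omega) (by omega)]
        omega), Finset.card_singleton]
    · -- diagCount = 2
      unfold diagCount
      have hfil : Finset.filter (fun e => ¬ IsHullEdge e)
          (arc n hn0 (r + 1) (m - 1) ∪ arc n hn0 (r + m + 1) (n - m - 2) ∪
            {S n hn0 r 0 (m + 1), S n hn0 r 0 m}) =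
          {S n hn0 r 0 (m + 1), S n hn0 r 0 m} := by
        ext e
        constructor
        · intro h
          obtain ⟨hA, hnh⟩ := Finset.mem_filter.mp h
          obtain ⟨x, y, hxy, hyn, rfl, hq⟩ := (memEA' hn0 hn hm2 hm).mp hA
          rcases hq with ⟨rfl, -, -⟩ | ⟨rfl, -, -⟩ | ⟨rfl, rfl⟩ | ⟨rfl, hy⟩
          · exact absurd (hull_unit hn0 r x) hnh
          · exact absurd (hull_unit hn0 r x) hnh
          · exact Finset.mem_insert_self _ _
          · rw [hy]
            exact Finset.mem_insert.mpr (Or.inr (Finset.mem_singleton_self _))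
        · intro h
          rcases Finset.mem_insert.mp h with rfl | h
          · refine Finset.mem_filter.mpr ⟨(memEA' hn0 hn hm2 hm).mpr ⟨0, m + 1, by omega,
              by omega, rfl, Or.inr (Or.inr (Or.inl ⟨rfl, rfl⟩))⟩,
              not_hull hn0 r (by omega) (by omega) ?_ ?_⟩
            · rw [Nat.mod_eq_of_lt (show 0 + 1 < n by omega)]
              omega
            · rw [Nat.mod_eq_of_lt (show m + 1 + 1 < n by omega)]
              omega
          · rw [Finset.mem_singleton] at h
            subst h
            refine Finset.mem_filter.mpr ⟨(memEA' hn0 hn hm2 hm).mpr ⟨0, m, by omega,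
              by omega, rfl, Or.inr (Or.inr (Or.inr ⟨rfl, rfl⟩))⟩,
              not_hull hn0 r (by omega) (by omega) ?_ ?_⟩
            · rw [Nat.mod_eq_of_lt (show 0 + 1 < n by omega)]
              omega
            · rw [Nat.mod_eq_of_lt (show m + 1 < n by omega)]
              omega
      rw [hfil, Finset.card_insert_of_notMem (by
        rw [Finset.mem_singleton, S_inj hn0 r (by omega) (by omega) (by omega) (by omega)]
        omega), Finset.card_singleton]
    · -- (a, b) is not an edge of v'
      intro h
      have h' : S n hn0 r 0 1 ∈ arc n hn0 (r + 1) (m - 1) ∪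
          arc n hn0 (r + m + 1) (n - m - 2) ∪ {S n hn0 r 0 (m + 1), S n hn0 r 0 m} := h
      obtain ⟨x, y, hxy, hyn, heq2, hq⟩ := (memEA' hn0 hn hm2 hm).mp h'
      rw [S_inj hn0 r (by omega) (by omega) (by omega) (by omega)] at heq2
      omega
  · -- Part 2: diagonal (c, y); no valid neighbor exists
    rintro hv ⟨v', hadj, hdiag, hnot⟩
    have hvE : v.1 = arc n hn0 r m ∪ arc n hn0 (r + m + 1) (n - m - 2) ∪
        {S n hn0 r m (n - 1)} := by
      rw [hv]
      have hone : S n hn0 r m (n - 1) =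
          s(pt n hn0 (r + m), pt n hn0 (r + n - 1)) := by
        unfold S
        rw [pt_congr hn0 (show r + (n - 1) = r + n - 1 by omega)]
      rw [← hone]
    obtain ⟨hne, hcard2⟩ := hadj
    obtain ⟨pv, hpv⟩ := v.2.1
    obtain ⟨pv', hpv'⟩ := v'.2.1
    have hcardA : v.1.card = n - 1 := by rw [hpv, pathEdges_card hn0]
    have hcardB : v'.1.card = n - 1 := by rw [hpv', pathEdges_card hn0]
    have hABne : v.1 ≠ v'.1 := fun h => hne (Subtype.ext h)
    have h1 : (v.1 \ v'.1).Nonempty := by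
      rw [Finset.nonempty_iff_ne_empty]
      intro h
      have hsub : v.1 ⊆ v'.1 := by rwa [Finset.sdiff_eq_empty_iff_subset] at h
      exact hABne (Finset.eq_of_subset_of_card_le hsub (by omega))
    have h2 : (v'.1 \ v.1).Nonempty := by
      rw [Finset.nonempty_iff_ne_empty]
      intro h
      have hsub : v'.1 ⊆ v.1 := by rwa [Finset.sdiff_eq_empty_iff_subset] at h
      exact hABne (Finset.eq_of_subset_of_card_le hsub (by omega)).symm
    have hcc : (v.1 \ v'.1).card + (v'.1 \ v.1).card = 2 := by
      rw [← Finset.card_union_of_disjoint disjoint_sdiff_sdiff]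
      exact hcard2
    have hp1 := Finset.card_pos.mpr h1
    have hp2 := Finset.card_pos.mpr h2
    obtain ⟨e, he⟩ := Finset.card_eq_one.mp (show (v.1 \ v'.1).card = 1 by omega)
    obtain ⟨f, hfs⟩ := Finset.card_eq_one.mp (show (v'.1 \ v.1).card = 1 by omega)
    have heA : e ∈ v.1 ∧ e ∉ v'.1 := Finset.mem_sdiff.mp (he ▸ Finset.mem_singleton_self e)
    have hfB : f ∈ v'.1 ∧ f ∉ v.1 := Finset.mem_sdiff.mp (hfs ▸ Finset.mem_singleton_self f)
    have hBeq : v'.1 = (v.1 \ {e}) ∪ {f} := by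
      ext x
      simp only [Finset.mem_union, Finset.mem_sdiff, Finset.mem_singleton]
      constructor
      · intro hx
        by_cases hxa : x ∈ v.1
        · exact Or.inl ⟨hxa, fun hh => heA.2 (hh ▸ hx)⟩
        · right
          have hmem : x ∈ v'.1 \ v.1 := Finset.mem_sdiff.mpr ⟨hx, hxa⟩
          rw [hfs] at hmem
          exact Finset.mem_singleton.mp hmem
      · rintro (⟨hxa, hxe⟩ | rfl)
        · by_contra hxb
          have hmem : x ∈ v.1 \ v'.1 := Finset.mem_sdiff.mpr ⟨hxa, hxb⟩
          rw [he] at hmem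
          exact hxe (Finset.mem_singleton.mp hmem)
        · exact hfB.1
    have hS01A : S n hn0 r 0 1 ∈ v.1 := by
      rw [hvE]
      exact (memEB hn0 hn hm2 hm).mpr ⟨0, 1, by omega, by omega, rfl, Or.inl ⟨rfl, by omega⟩⟩
    have heS : e = S n hn0 r 0 1 := by
      have hmem : S n hn0 r 0 1 ∈ v.1 \ v'.1 := Finset.mem_sdiff.mpr ⟨hS01A, hnot⟩
      rw [he] at hmem
      exact (Finset.mem_singleton.mp hmem).symm
    have hfpath : f ∈ pathEdges pv' := hpv' ▸ hfB.1
    obtain ⟨fi, fj, hfij, hfj⟩ := mem_pathEdges.mp hfpath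
    have hfi_ne : pv' fi ≠ pv' fj := by
      intro hh
      have h3 := pv'.injective hh
      have h4 := congrArg Fin.val h3
      omega
    have hf_not_in : f ∉ v.1 \ {e} := fun hh => hfB.2 (Finset.mem_sdiff.mp hh).1
    have hdeg0 : degIn (v.1 \ {e}) (pt n hn0 (r + 0)) = 0 := by
      rw [heS, hvE]
      exact degB_zero hn0 hn hm2 hm
    have hptr : pt n hn0 (r + 0) ∈ f := by
      by_contra hcon
      have hge := deg_ge_one (show 2 ≤ n by omega) pv' (pt n hn0 (r + 0))
      rw [← hpv', hBeq, degIn_union_singleton hf_not_in, if_neg hcon, hdeg0] at hge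
      omega
    have hw : ∃ w : Fin n, f = s(pt n hn0 (r + 0), w) ∧ w ≠ pt n hn0 (r + 0) := by
      rw [hfij, Sym2.mem_iff] at hptr
      obtain h | h := hptr
      · exact ⟨pv' fj, by rw [hfij, ← h], fun hh => hfi_ne (h.symm.trans hh.symm)⟩
      · refine ⟨pv' fi, by rw [hfij, ← h]; exact Sym2.eq_swap, fun hh => hfi_ne (hh.trans h)⟩
    obtain ⟨w, hfw, hwne⟩ := hw
    obtain ⟨x, hxn, rfl⟩ := pt_surj hn0 r w
    have hx0 : x ≠ 0 := fun hh => hwne (by rw [hh])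
    have hcap : degIn v'.1 (pt n hn0 (r + x)) ≤ 2 := by
      rw [hpv']
      exact deg_le_two pv' _
    have hwinf : pt n hn0 (r + x) ∈ f := by
      rw [hfw, Sym2.mem_iff]
      right
      rfl
    have hdegw : degIn v'.1 (pt n hn0 (r + x)) = degIn (v.1 \ {e}) (pt n hn0 (r + x)) + 1 := by
      rw [hBeq, degIn_union_singleton hf_not_in, if_pos hwinf]
    have hdegw1 : degIn (v.1 \ {e}) (pt n hn0 (r + x)) ≤ 1 := by omega
    have hx_cases : x = 1 ∨ x = m + 1 := by
      by_contra hcon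
      push_neg at hcon
      rw [heS, hvE] at hdegw1
      have := degB_two (r := r) hn0 hn hm2 hm hxn hx0 hcon.1 hcon.2
      omega
    obtain rfl | rfl := hx_cases
    · exact hfB.2 (by rw [hfw]; exact hS01A)
    · have hdiagA : S n hn0 r m (n - 1) ∈ v.1 := by
        rw [hvE]
        exact (memEB hn0 hn hm2 hm).mpr ⟨m, n - 1, by omega, by omega, rfl,
          Or.inr (Or.inr ⟨rfl, rfl⟩)⟩
      have hdiagB : S n hn0 r m (n - 1) ∈ v'.1 := by
        rw [hBeq]
        apply Finset.mem_union_left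
        rw [Finset.mem_sdiff, Finset.mem_singleton]
        refine ⟨hdiagA, ?_⟩
        rw [heS, S_inj hn0 r (by omega) (by omega) (by omega) (by omega)]
        omega
      have hcross : Crosses f (S n hn0 r m (n - 1)) := by
        rw [hfw]
        exact crosses_S hn0 r (by omega) (by omega) (by omega) (by omega)
      exact v'.2.2 f hfB.1 _ hdiagB hcross

end PG
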